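/- (Short path after jumps) In the asynchronous muddy-children protocol extended with the jump transition (from ⟨Obs, r, u⟩ with r < |Obs| − 1 to ⟨Obs, |Obs| − 1, u⟩, no input, no output), from any consistent initial composite state with at least two muddy children there exists a valid trace reaching a final composite state (every child's status matches the instance) whose length is at most 4n + 3, obtained by: all children init and jump, one muddy child emits an unknown-status message at round |Obs| − 1, another muddy child receives it, discovers they are muddy and emits a muddy-status message, and all remaining children receive that message and discover their status. -/

import Mathlib

/-- Epistemic status of a child: unknown, muddy, or clean. -/
inductive Status : Type
  | u | m | c

/-- A message ⟨j, r, status⟩. -/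
structure Msg (n : ℕ) : Type where
  sender : Fin n
  round : ℕ
  status : Status

/-- A child's state: initial ⟨Obs⟩ or running ⟨Obs, r, status⟩. -/
inductive ChildState (n : ℕ) : Type
  | start (Obs : Finset (Fin n))
  | run (Obs : Finset (Fin n)) (r : ℕ) (st : Status)

open Status ChildState

/-- Observation set of a child state. -/
def ChildState.obs {n : ℕ} : ChildState n → Finset (Fin n)
  | .start O => O
  | .run O _ _ => O

/-- A composite state. -/
abbrev CState (n : ℕ) := Fin n → ChildState n

/-- The set M of muddy children determined by a composite state. -/
def muddySet {n : ℕ} (σ : CState n) : Finset (Fin n) :=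
  Finset.univ.biUnion fun i => (σ i).obs

/-- consistent(σ): M nonempty and every child sees exactly M \ {i}. -/
def consistent {n : ℕ} (σ : CState n) : Prop :=
  (muddySet σ).Nonempty ∧ ∀ i, (σ i).obs = muddySet σ \ {i}

/-- The constrained local transitions of child `i` (labels init/emit/receive). -/
inductive LocalStep {n : ℕ} (i : Fin n) :
    ChildState n → Option (Msg n) → ChildState n → Option (Msg n) → Prop
  | init_nonempty (O : Finset (Fin n)) (h : O ≠ ∅) :
      LocalStep i (start O) none (run O 0 u) none
  | init_empty (O : Finset (Fin n)) (h : O = ∅) :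
      LocalStep i (start O) none (run O 0 m) none
  | emit (O : Finset (Fin n)) (r : ℕ) (s : Status) :
      LocalStep i (run O r s) none (run O r s) (some ⟨i, r, s⟩)
  | jump (O : Finset (Fin n)) (r : ℕ) (h : r < O.card - 1) :
      LocalStep i (run O r u) none (run O (O.card - 1) u) none
  | recv_decided (O : Finset (Fin n)) (r : ℕ) (s : Status) (mg : Msg n) (h : s ≠ u) :
      LocalStep i (run O r s) (some mg) (run O r s) none
  | recv_c_eq (O : Finset (Fin n)) (r : ℕ) (j : Fin n) (r' : ℕ)
      (hj : j ∉ O) (hr : r' = O.card) :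
      LocalStep i (run O r u) (some ⟨j, r', c⟩) (run O r' c) none
  | recv_c_succ (O : Finset (Fin n)) (r : ℕ) (j : Fin n) (r' : ℕ)
      (hj : j ∉ O) (hr : r' = O.card + 1) :
      LocalStep i (run O r u) (some ⟨j, r', c⟩) (run O (r' - 1) m) none
  | recv_m_eq (O : Finset (Fin n)) (r : ℕ) (j : Fin n) (r' : ℕ)
      (hj : j ∈ O) (hr : r' = O.card) :
      LocalStep i (run O r u) (some ⟨j, r', m⟩) (run O r' m) none
  | recv_m_pred (O : Finset (Fin n)) (r : ℕ) (j : Fin n) (r' : ℕ)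
      (hj : j ∈ O) (hr : r' = O.card - 1) :
      LocalStep i (run O r u) (some ⟨j, r', m⟩) (run O (r' + 1) c) none
  | recv_u_in_lt (O : Finset (Fin n)) (r : ℕ) (j : Fin n) (r' : ℕ)
      (hj : j ∈ O) (hr : r' < r) :
      LocalStep i (run O r u) (some ⟨j, r', u⟩) (run O r u) none
  | recv_u_in_mid (O : Finset (Fin n)) (r : ℕ) (j : Fin n) (r' : ℕ)
      (hj : j ∈ O) (h1 : r ≤ r') (h2 : r' < O.card - 1) :
      LocalStep i (run O r u) (some ⟨j, r', u⟩) (run O (r' + 1) u) none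
  | recv_u_in_top (O : Finset (Fin n)) (r : ℕ) (j : Fin n) (r' : ℕ)
      (hj : j ∈ O) (hr : r' = O.card - 1) :
      LocalStep i (run O r u) (some ⟨j, r', u⟩) (run O (r' + 1) m) none
  | recv_u_out_le (O : Finset (Fin n)) (r : ℕ) (j : Fin n) (r' : ℕ)
      (hj : j ∉ O) (hr : r' ≤ r) :
      LocalStep i (run O r u) (some ⟨j, r', u⟩) (run O r u) none
  | recv_u_out_mid (O : Finset (Fin n)) (r : ℕ) (j : Fin n) (r' : ℕ)
      (hj : j ∉ O) (h1 : r < r') (h2 : r' < O.card) :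
      LocalStep i (run O r u) (some ⟨j, r', u⟩) (run O r' u) none
  | recv_u_out_top (O : Finset (Fin n)) (r : ℕ) (j : Fin n) (r' : ℕ)
      (hj : j ∉ O) (hr : r' = O.card) :
      LocalStep i (run O r u) (some ⟨j, r', u⟩) (run O r' m) none

/-- The no-equivocation condition on an input message: the sender must be in a
running state matching the message (or a state strictly ahead of an unknown-status message). -/
def senderOK {n : ℕ} (σ : CState n) (mg : Msg n) : Prop :=
  ∃ (O : Finset (Fin n)) (rj : ℕ) (sj : Status),
    σ mg.sender = run O rj sj ∧
      ((mg.status = sj ∧ mg.round = rj) ∨ (mg.status = u ∧ mg.round < rj))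

/-- The composition constraint: init transitions require consistency of the
composite state, receives require the no-equivocation condition. -/
def stepConstraint {n : ℕ} (σ : CState n) (i : Fin n) (inp : Option (Msg n)) : Prop :=
  ((∃ O, σ i = start O) → consistent σ) ∧ ∀ mg, inp = some mg → senderOK σ mg

/-- Constrained transitions of the composite system: component `i` takes a local
transition, subject to the composition constraint. -/
inductive CStep {n : ℕ} :
    CState n → Fin n → Option (Msg n) → CState n → Option (Msg n) → Prop
  | mk (σ : CState n) (i : Fin n) (inp : Option (Msg n)) (s' : ChildState n)
      (out : Option (Msg n))
      (hl : LocalStep i (σ i) inp s' out) (hc : stepConstraint σ i inp) :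
      CStep σ i inp (Function.update σ i s') out

/-- A recorded transition: acting component, input message, output message. -/
abbrev Transition (n : ℕ) := Fin n × Option (Msg n) × Option (Msg n)

/-- A composite state is initial when all components are in initial states. -/
def isInitial {n : ℕ} (σ : CState n) : Prop := ∀ i, ∃ O, σ i = start O

/-- The trace `tr` emits the message `mg`. -/
def emits {n : ℕ} (tr : List (Transition n)) (mg : Msg n) : Prop :=
  ∃ i inp, (i, inp, some mg) ∈ tr

/-- The message `mg` is an input of some transition of the trace `tr`. -/
def isInput {n : ℕ} (tr : List (Transition n)) (mg : Msg n) : Prop :=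
  ∃ i out, (i, some mg, out) ∈ tr

/-- Constrained traces: sequences of constrained transitions from `σ0`. -/
inductive ConstrainedTrace {n : ℕ} (σ0 : CState n) :
    List (Transition n) → CState n → Prop
  | nil : ConstrainedTrace σ0 [] σ0
  | snoc (tr : List (Transition n)) (σ : CState n) (i : Fin n)
      (inp : Option (Msg n)) (σ' : CState n) (out : Option (Msg n))
      (htr : ConstrainedTrace σ0 tr σ)
      (hstep : CStep σ i inp σ' out) :
      ConstrainedTrace σ0 (tr ++ [(i, inp, out)]) σ'

/-- Valid messages from the initial composite state `σ0`: messages emitted by a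
constrained trace from `σ0` all of whose input messages are themselves valid,
i.e., emitted by valid traces from `σ0`. -/
inductive ValidMsg {n : ℕ} (σ0 : CState n) : Msg n → Prop
  | intro (mg : Msg n) (tr : List (Transition n)) (σ : CState n)
      (h0 : isInitial σ0)
      (hct : ConstrainedTrace σ0 tr σ)
      (hin : ∀ mg', isInput tr mg' → ValidMsg σ0 mg')
      (hem : emits tr mg) : ValidMsg σ0 mg

/-- Valid traces from `σ0`: constrained traces from an initial composite state
in which every input message can be emitted by some valid trace from `σ0`. -/
def ValidTrace {n : ℕ} (σ0 : CState n) (tr : List (Transition n)) (σ : CState n) : Prop :=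
  isInitial σ0 ∧ ConstrainedTrace σ0 tr σ ∧ ∀ mg, isInput tr mg → ValidMsg σ0 mg

/-- Status of a running child state. -/
def ChildState.status? {n : ℕ} : ChildState n → Option Status
  | .start _ => none
  | .run _ _ s => some s

/-- A composite state is final when every component knows its status. -/
def isFinal {n : ℕ} (σ : CState n) : Prop :=
  ∀ i, ∃ (O : Finset (Fin n)) (r : ℕ) (s : Status), σ i = run O r s ∧ s ≠ u

/-- Round of a child state, with initial states at round -1. -/
def roundZ {n : ℕ} : ChildState n → ℤ
  | .start _ => -1
  | .run _ r _ => (r : ℤ)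

section AuxHelpers

variable {n : ℕ}

lemma ctrace_append {σ0 σ1 σ2 : CState n} {tr1 tr2 : List (Transition n)}
    (h1 : ConstrainedTrace σ0 tr1 σ1) (h2 : ConstrainedTrace σ1 tr2 σ2) :
    ConstrainedTrace σ0 (tr1 ++ tr2) σ2 := by
  induction h2 with
  | nil => simpa using h1
  | snoc tr σ i inp σ' out htr hstep ih =>
      rw [← List.append_assoc]
      exact ConstrainedTrace.snoc _ _ _ _ _ _ ih hstep

lemma ctrace_single {σ0 : CState n} {i : Fin n} {inp out} {σ1 : CState n}
    (h : CStep σ0 i inp σ1 out) : ConstrainedTrace σ0 [(i, inp, out)] σ1 := by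
  have := ConstrainedTrace.snoc (σ0 := σ0) [] σ0 i inp σ1 out .nil h
  simpa using this

lemma localstep_obs_eq {i : Fin n} {s s' : ChildState n} {inp out}
    (h : LocalStep i s inp s' out) : s'.obs = s.obs := by
  cases h <;> rfl

lemma muddySet_congr {σ σ' : CState n} (h : ∀ j, (σ' j).obs = (σ j).obs) :
    muddySet σ' = muddySet σ := by
  unfold muddySet
  exact Finset.biUnion_congr rfl (fun j _ => h j)

lemma consistent_of_obs_eq {σ σ' : CState n} (h : ∀ j, (σ' j).obs = (σ j).obs)
    (hc : consistent σ) : consistent σ' := by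
  unfold consistent at *
  rw [muddySet_congr h]
  exact ⟨hc.1, fun i => (h i).trans (hc.2 i)⟩

lemma parallel_steps (σ : CState n) (hcons : consistent σ)
    (inp : Option (Msg n)) (b : Fin n → ChildState n)
    (L : List (Fin n)) (hnd : L.Nodup)
    (hstep : ∀ i ∈ L, LocalStep i (σ i) inp (b i) none)
    (hobs : ∀ i ∈ L, (b i).obs = (σ i).obs)
    (hsend : ∀ mg, inp = some mg → mg.sender ∉ L ∧ senderOK σ mg) :
    ConstrainedTrace σ (L.map fun i => (i, inp, none))
      (fun i => if i ∈ L then b i else σ i) := by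
  induction L generalizing σ with
  | nil => simpa using ConstrainedTrace.nil
  | cons k L ih =>
    have hstepi := hstep k (List.mem_cons_self : k ∈ k :: L)
    have hcstep : CStep σ k inp (Function.update σ k (b k)) none :=
      CStep.mk σ k inp (b k) none hstepi
        ⟨fun _ => hcons, fun mg hmg => (hsend mg hmg).2⟩
    have hobs' : ∀ j, ((Function.update σ k (b k)) j).obs = (σ j).obs := by
      intro j
      by_cases hj : j = k
      · subst hj; simp [hobs _ List.mem_cons_self]
      · simp [Function.update_of_ne hj]
    have hmemL : ∀ j ∈ L, (Function.update σ k (b k)) j = σ j := by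
      intro j hj
      have hne : j ≠ k := fun h => (List.nodup_cons.1 hnd).1 (h ▸ hj)
      simp [Function.update_of_ne hne]
    have ih' := ih (Function.update σ k (b k))
      (consistent_of_obs_eq hobs' hcons)
      (List.nodup_cons.1 hnd).2
      (fun j hj => by
        rw [hmemL j hj]; exact hstep j (List.mem_cons_of_mem _ hj))
      (fun j hj => by rw [hmemL j hj]; exact hobs j (List.mem_cons_of_mem _ hj))
      (fun mg hmg => by
        obtain ⟨hns, hok⟩ := hsend mg hmg
        refine ⟨fun h => hns (List.mem_cons_of_mem _ h), ?_⟩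
        have hne : mg.sender ≠ k := fun h => hns (h ▸ (List.mem_cons_self : k ∈ k :: L))
        obtain ⟨O, rj, sj, hrun, hrest⟩ := hok
        exact ⟨O, rj, sj, by rw [Function.update_of_ne hne]; exact hrun, hrest⟩)
    have hfin : (fun j => if j ∈ L then b j else (Function.update σ k (b k)) j)
        = (fun j => if j ∈ k :: L then b j else σ j) := by
      funext j
      by_cases hjL : j ∈ L
      · simp [hjL]
      · by_cases hji : j = k
        · subst hji; simp [hjL]
        · simp [hjL, hji, Function.update_of_ne hji]
    rw [hfin] at ih'
    have := ctrace_append (ctrace_single hcstep) ih'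
    simpa using this

end AuxHelpers

/-- Short path after jumps: in the protocol extended with the jump transition,
from any consistent initial composite state with at least two muddy children
there is a valid trace of length at most 4n + 3 reaching a final composite
state in which every child's status matches the instance of the problem. -/
theorem muddy_jump_short_path (n : ℕ) (hn : 1 ≤ n)
    (σ0 : CState n) (h0 : isInitial σ0) (hc : consistent σ0)
    (h2 : 2 ≤ (muddySet σ0).card) :
    ∃ (tr : List (Transition n)) (σ : CState n),
      ValidTrace σ0 tr σ ∧ tr.length ≤ 4 * n + 3 ∧
      ∀ i : Fin n, ∃ (O : Finset (Fin n)) (r : ℕ),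
        σ i = ChildState.run O r
          (if i ∈ muddySet σ0 then Status.m else Status.c) := by
  classical
  set M := muddySet σ0 with hM
  set N := M.card with hN
  have hN2 : 2 ≤ N := h2
  set O : Fin n → Finset (Fin n) := fun i => M \ {i} with hOdef
  have hO : ∀ i, (σ0 i).obs = O i := hc.2
  have hstart : ∀ i, σ0 i = start (O i) := by
    intro i
    obtain ⟨Oi, hi⟩ := h0 i
    have hOi : Oi = O i := by rw [← hO i, hi]; rfl
    rw [hi, hOi]
  have hcardO : ∀ i, (O i).card = if i ∈ M then N - 1 else N := by
    intro i
    by_cases hi : i ∈ M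
    · simp only [hOdef, hi, if_true]
      rw [Finset.card_sdiff_of_subset (by simpa using hi)]
      simp [hN]
    · simp only [hOdef, hi, if_false]
      congr 1
      ext x
      simp only [Finset.mem_sdiff, Finset.mem_singleton]
      exact ⟨fun h => h.1, fun h => ⟨h, fun hx => hi (hx ▸ h)⟩⟩
  have hOne : ∀ i, O i ≠ ∅ := by
    intro i
    have : 0 < (O i).card := by
      rw [hcardO i]; split <;> omega
    exact (Finset.card_pos.mp this).ne_empty
  obtain ⟨a, haM, b, hbM, hab⟩ := Finset.one_lt_card.1 (by omega : 1 < M.card)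
  have hcarda : (O a).card = N - 1 := by rw [hcardO a, if_pos haM]
  have hcardb : (O b).card = N - 1 := by rw [hcardO b, if_pos hbM]
  set Na : ℕ := (O a).card - 1 with hNa
  have hNaN : Na = N - 2 := by omega
  -- Phase 1: all init
  set σA : CState n := fun i => run (O i) 0 u with hσA
  have ph1 : ConstrainedTrace σ0
      ((List.finRange n).map fun i => (i, (none : Option (Msg n)), (none : Option (Msg n)))) σA := by
    have h := parallel_steps σ0 hc none (fun i => run (O i) 0 u) (List.finRange n)
      (List.nodup_finRange n)
      (fun i _ => by rw [hstart i]; exact LocalStep.init_nonempty (O i) (hOne i))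
      (fun i _ => (hO i).symm)
      (fun mg hmg => by simp at hmg)
    have he : (fun i => if i ∈ List.finRange n then run (O i) 0 u else σ0 i) = σA := by
      funext i; simp [List.mem_finRange, hσA]
    rwa [he] at h
  have hobsA : ∀ j, (σA j).obs = (σ0 j).obs := fun j => by rw [hO j]; rfl
  have hconsA : consistent σA := consistent_of_obs_eq hobsA hc
  -- Phase 2: jumps
  set σB : CState n := fun i => run (O i) ((O i).card - 1) u with hσB
  set L2 : List (Fin n) := (List.finRange n).filter (fun i => decide (1 < (O i).card)) with hL2
  have ph2 : ConstrainedTrace σA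
      (L2.map fun i => (i, (none : Option (Msg n)), (none : Option (Msg n)))) σB := by
    have h := parallel_steps σA hconsA none (fun i => run (O i) ((O i).card - 1) u) L2
      ((List.nodup_finRange n).filter _)
      (fun i hi => by
        have h1 : 1 < (O i).card := of_decide_eq_true (List.mem_filter.1 hi).2
        exact LocalStep.jump (O i) 0 (by omega))
      (fun i _ => rfl)
      (fun mg hmg => by simp at hmg)
    have he : (fun i => if i ∈ L2 then run (O i) ((O i).card - 1) u else σA i) = σB := by
      funext i
      by_cases hi : i ∈ L2
      · simp [hi, hσB]
      · have h1 : ¬ (1 < (O i).card) := by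
          intro hgt
          exact hi (List.mem_filter.2 ⟨List.mem_finRange i, decide_eq_true hgt⟩)
        have hz : (O i).card - 1 = 0 := by omega
        simp [hi, hσA, hσB, hz]
    rwa [he] at h
  have hobsB : ∀ j, (σB j).obs = (σ0 j).obs := fun j => by rw [hO j]; rfl
  have hconsB : consistent σB := consistent_of_obs_eq hobsB hc
  -- Phase 3: a emits mg1
  set mg1 : Msg n := ⟨a, Na, u⟩ with hmg1
  have step3 : CStep σB a none σB (some mg1) := by
    have h := CStep.mk σB a none (run (O a) ((O a).card - 1) u) (some ⟨a, (O a).card - 1, u⟩)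
      (LocalStep.emit (O a) ((O a).card - 1) u)
      ⟨fun _ => hconsB, fun mg hmg => by simp at hmg⟩
    have he : Function.update σB a (run (O a) ((O a).card - 1) u) = σB := by
      funext j
      by_cases hj : j = a
      · subst hj; simp [hσB]
      · simp [Function.update_of_ne hj]
    rwa [he] at h
  -- Phase 4: b receives mg1
  have haOb : a ∈ O b := by
    simp only [hOdef, Finset.mem_sdiff, Finset.mem_singleton]
    exact ⟨haM, hab⟩
  have hbOa : b ∈ O a := by
    simp only [hOdef, Finset.mem_sdiff, Finset.mem_singleton]
    exact ⟨hbM, fun h => hab h.symm⟩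
  set σC : CState n := Function.update σB b (run (O b) (Na + 1) m) with hσC
  have step4 : CStep σB b (some mg1) σC none := by
    have hloc : LocalStep b (σB b) (some mg1) (run (O b) (Na + 1) m) none := by
      show LocalStep b (run (O b) ((O b).card - 1) u) (some ⟨a, Na, u⟩) _ none
      exact LocalStep.recv_u_in_top (O b) ((O b).card - 1) a Na haOb (by omega)
    exact CStep.mk σB b (some mg1) (run (O b) (Na + 1) m) none hloc
      ⟨fun _ => hconsB, fun mg hmg => by
        cases hmg
        exact ⟨O a, (O a).card - 1, u, rfl, Or.inl ⟨rfl, rfl⟩⟩⟩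
  have hobsC : ∀ j, (σC j).obs = (σ0 j).obs := by
    intro j
    rw [hσC]
    by_cases hj : j = b
    · rw [hj, Function.update_self, hO b]; rfl
    · rw [Function.update_of_ne hj]; exact hobsB j
  have hconsC : consistent σC := consistent_of_obs_eq hobsC hc
  have hσCb : σC b = run (O b) (Na + 1) m := by simp [hσC]
  -- Phase 5: b emits mg2
  set mg2 : Msg n := ⟨b, Na + 1, m⟩ with hmg2
  have step5 : CStep σC b none σC (some mg2) := by
    have hloc : LocalStep b (σC b) none (run (O b) (Na + 1) m) (some mg2) := by
      rw [hσCb]; exact LocalStep.emit (O b) (Na + 1) m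
    have h := CStep.mk σC b none (run (O b) (Na + 1) m) (some mg2) hloc
      ⟨fun _ => hconsC, fun mg hmg => by simp at hmg⟩
    have he : Function.update σC b (run (O b) (Na + 1) m) = σC := by
      funext j
      by_cases hj : j = b
      · subst hj; simp [hσCb]
      · simp [Function.update_of_ne hj]
    rwa [he] at h
  -- Phase 6: everyone else receives mg2
  set L6 : List (Fin n) := (List.finRange n).filter (fun i => decide (i ≠ b)) with hL6
  set bF : Fin n → ChildState n := fun i =>
    if i ∈ M then run (O i) (Na + 1) m else run (O i) (Na + 1 + 1) c with hbF
  have hbL6 : b ∉ L6 := by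
    intro h
    have := of_decide_eq_true (List.mem_filter.1 h).2
    exact this rfl
  have hσCother : ∀ i, i ≠ b → σC i = run (O i) ((O i).card - 1) u := by
    intro i hi
    rw [hσC, Function.update_of_ne hi]
  have ph6 : ConstrainedTrace σC (L6.map fun i => (i, some mg2, (none : Option (Msg n))))
      (fun i => if i ∈ L6 then bF i else σC i) := by
    refine parallel_steps σC hconsC (some mg2) bF L6
      ((List.nodup_finRange n).filter _) ?_ ?_ ?_
    · intro i hi
      have hib : i ≠ b := of_decide_eq_true (List.mem_filter.1 hi).2
      have hbOi : b ∈ O i := by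
        simp only [hOdef, Finset.mem_sdiff, Finset.mem_singleton]
        exact ⟨hbM, fun h => hib h.symm⟩
      rw [hσCother i hib]
      by_cases hiM : i ∈ M
      · have hcardi : (O i).card = N - 1 := by rw [hcardO i, if_pos hiM]
        have : bF i = run (O i) (Na + 1) m := by rw [hbF]; simp [hiM]
        rw [this]
        have := LocalStep.recv_m_eq (i := i) (O i) ((O i).card - 1) b (Na + 1) hbOi (by omega)
        exact this
      · have hcardi : (O i).card = N := by rw [hcardO i, if_neg hiM]
        have : bF i = run (O i) (Na + 1 + 1) c := by rw [hbF]; simp [hiM]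
        rw [this]
        have := LocalStep.recv_m_pred (i := i) (O i) ((O i).card - 1) b (Na + 1) hbOi (by omega)
        exact this
    · intro i hi
      have hib : i ≠ b := of_decide_eq_true (List.mem_filter.1 hi).2
      have hbFi : bF i = if i ∈ M then run (O i) (Na + 1) m else run (O i) (Na + 1 + 1) c := rfl
      rw [hbFi, hσCother i hib]
      split <;> rfl
    · intro mg hmg
      cases hmg
      refine ⟨hbL6, O b, Na + 1, m, hσCb, Or.inl ⟨rfl, rfl⟩⟩
  set σF : CState n := fun i => if i ∈ L6 then bF i else σC i with hσF
  -- assemble the trace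
  set tr1 : List (Transition n) :=
    (List.finRange n).map (fun i => (i, (none : Option (Msg n)), (none : Option (Msg n)))) with htr1
  set tr2 : List (Transition n) :=
    L2.map (fun i => (i, (none : Option (Msg n)), (none : Option (Msg n)))) with htr2
  set tr6 : List (Transition n) :=
    L6.map (fun i => (i, some mg2, (none : Option (Msg n)))) with htr6
  set trA : List (Transition n) := tr1 ++ tr2 ++ [(a, none, some mg1)] with htrA
  set trB : List (Transition n) := trA ++ [(b, some mg1, none)] ++ [(b, none, some mg2)] with htrB
  set tr : List (Transition n) := trB ++ tr6 with htr
  have hctA : ConstrainedTrace σ0 trA σB :=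
    ctrace_append (ctrace_append ph1 ph2) (ctrace_single step3)
  have hctB : ConstrainedTrace σ0 trB σC :=
    ctrace_append (ctrace_append hctA (ctrace_single step4)) (ctrace_single step5)
  have hct : ConstrainedTrace σ0 tr σF := ctrace_append hctB ph6
  -- validity of messages
  have hvalid1 : ValidMsg σ0 mg1 := by
    refine ValidMsg.intro mg1 trA σB h0 hctA ?_ ?_
    · intro mg' hmg'
      obtain ⟨i, out, hmem⟩ := hmg'
      rw [htrA, htr1, htr2] at hmem
      simp only [List.mem_append, List.mem_map, List.mem_singleton] at hmem
      rcases hmem with (⟨j, _, hj⟩ | ⟨j, _, hj⟩) | hj <;>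
        · simp only [Prod.mk.injEq] at hj
          exact absurd hj.2.1 (by simp)
    · exact ⟨a, none, by rw [htrA]; simp⟩
  have hvalid2 : ValidMsg σ0 mg2 := by
    refine ValidMsg.intro mg2 trB σC h0 hctB ?_ ?_
    · intro mg' hmg'
      obtain ⟨i, out, hmem⟩ := hmg'
      rw [htrB, htrA, htr1, htr2] at hmem
      simp only [List.mem_append, List.mem_map, List.mem_singleton] at hmem
      rcases hmem with ((((⟨j, _, hj⟩ | ⟨j, _, hj⟩) | hj) | hj) | hj)
      · simp only [Prod.mk.injEq] at hj; exact absurd hj.2.1 (by simp)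
      · simp only [Prod.mk.injEq] at hj; exact absurd hj.2.1 (by simp)
      · simp only [Prod.mk.injEq] at hj; exact absurd hj.2.1 (by simp)
      · simp only [Prod.mk.injEq] at hj
        rw [Option.some_inj.1 hj.2.1]; exact hvalid1
      · simp only [Prod.mk.injEq] at hj; exact absurd hj.2.1 (by simp)
    · exact ⟨b, none, by rw [htrB]; simp⟩
  have hin : ∀ mg, isInput tr mg → ValidMsg σ0 mg := by
    intro mg hmg
    obtain ⟨i, out, hmem⟩ := hmg
    rw [htr, htrB, htrA, htr1, htr2, htr6] at hmem
    simp only [List.mem_append, List.mem_map, List.mem_singleton] at hmem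
    rcases hmem with (((((⟨j, _, hj⟩ | ⟨j, _, hj⟩) | hj) | hj) | hj) | ⟨j, _, hj⟩)
    · simp only [Prod.mk.injEq] at hj; exact absurd hj.2.1 (by simp)
    · simp only [Prod.mk.injEq] at hj; exact absurd hj.2.1 (by simp)
    · simp only [Prod.mk.injEq] at hj; exact absurd hj.2.1 (by simp)
    · simp only [Prod.mk.injEq] at hj
      rw [Option.some_inj.1 hj.2.1]; exact hvalid1
    · simp only [Prod.mk.injEq] at hj; exact absurd hj.2.1 (by simp)
    · simp only [Prod.mk.injEq] at hj
      rw [← Option.some_inj.1 hj.2.1]; exact hvalid2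
  -- length
  have hlen : tr.length ≤ 4 * n + 3 := by
    have h2l : L2.length ≤ n := by
      calc L2.length ≤ (List.finRange n).length := List.length_filter_le _ _
        _ = n := List.length_finRange
    have h6l : L6.length ≤ n := by
      calc L6.length ≤ (List.finRange n).length := List.length_filter_le _ _
        _ = n := List.length_finRange
    simp only [htr, htrB, htrA, htr1, htr2, htr6, List.length_append, List.length_map,
      List.length_singleton, List.length_finRange]
    omega
  refine ⟨tr, σF, ⟨h0, hct, hin⟩, hlen, ?_⟩
  intro i
  by_cases hib : i = b
  · refine ⟨O i, Na + 1, ?_⟩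
    have : σF i = if i ∈ L6 then bF i else σC i := rfl
    rw [this, hib, if_neg hbL6, hσCb, if_pos hbM]
  · have hiL6 : i ∈ L6 := List.mem_filter.2 ⟨List.mem_finRange i, decide_eq_true hib⟩
    refine ⟨O i, if i ∈ M then Na + 1 else Na + 1 + 1, ?_⟩
    have h1 : σF i = if i ∈ L6 then bF i else σC i := rfl
    have h2 : bF i = if i ∈ M then run (O i) (Na + 1) m else run (O i) (Na + 1 + 1) c := rfl
    rw [h1, if_pos hiL6, h2]
    by_cases hiM : i ∈ M <;> simp [hiM]
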